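/- Let V be a finite set of n ≥ 3 elements, fix u ∈ V, let k ≥ 1, and suppose that for each v ∈ V \ {u} there is a function f_v from k-element subsets of V \ {u, v} to a message set M. If |M| < ((n−2)/(2k))^k, then there exist distinct nodes v*, w* ∈ V \ {u} and k-element subsets S ≠ S' of V \ {u, v*} with w* ∈ S, w* ∉ S', f_{v*}(S) = f_{v*}(S'), and moreover there exist k-element subsets T ≠ T' of V \ {u, w*} with v* ∈ T, v* ∉ T', and f_{w*}(T) = f_{w*}(T'). -/

import Mathlib

open Finset

private lemma div_pow_le_choose : ∀ (k m : ℕ), k ≤ m → ((m : ℝ) / k) ^ k ≤ m.choose k := by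
  intro k
  induction k with
  | zero => intro m _; simp
  | succ k ih =>
    intro m hm
    have hm1 : 1 ≤ m := by omega
    have hk1 : k ≤ m - 1 := by omega
    have hmc : ((m - 1 : ℕ) : ℝ) = (m : ℝ) - 1 := by
      push_cast [Nat.cast_sub hm1]; ring
    have key : (m.choose (k+1) : ℝ) * (k+1) = (m : ℝ) * ((m-1).choose k) := by
      have h := Nat.add_one_mul_choose_eq (m-1) k
      have hm' : (m - 1).succ = m := by omega
      simp only [← Nat.succ_eq_add_one] at h
      rw [hm'] at h
      simp only [Nat.succ_eq_add_one] at h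
      have h' : (((m.choose (k+1)) * (k+1) : ℕ) : ℝ) = ((m * ((m-1).choose k) : ℕ) : ℝ) := by
        exact_mod_cast h.symm
      push_cast at h'
      linarith
    have hk0 : (0:ℝ) < (k:ℝ) + 1 := by positivity
    have hchoose : (m.choose (k+1) : ℝ) = (m : ℝ) / (k+1) * ((m-1).choose k) := by
      field_simp
      linarith [key]
    have hstep : ((m : ℝ) / (k+1)) ^ k ≤ ((m-1).choose k : ℝ) := by
      rcases Nat.eq_zero_or_pos k with hk | hkpos
      · subst hk; simp
      · have hbase : (m : ℝ) / (k+1) ≤ ((m-1 : ℕ) : ℝ) / k := by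
          rw [div_le_div_iff₀ hk0 (by exact_mod_cast hkpos)]
          rw [hmc]
          have : (k : ℝ) + 1 ≤ m := by exact_mod_cast hm
          nlinarith
        calc ((m : ℝ) / (k+1)) ^ k ≤ (((m-1:ℕ) : ℝ) / k) ^ k := by
              apply pow_le_pow_left₀ (by positivity) hbase
          _ ≤ ((m-1).choose k : ℝ) := ih (m-1) hk1
    have hcast : ((k+1 : ℕ) : ℝ) = (k:ℝ)+1 := by push_cast; ring
    rw [hcast]
    calc ((m : ℝ) / ((k:ℝ)+1)) ^ (k+1) = (m : ℝ) / (k+1) * ((m : ℝ) / (k+1)) ^ k := by ring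
      _ ≤ (m : ℝ) / (k+1) * ((m-1).choose k : ℝ) := by
          apply mul_le_mul_of_nonneg_left hstep (by positivity)
      _ = (m.choose (k+1) : ℝ) := hchoose.symm

private lemma collision_aux {V M : Type*} [Fintype M] [DecidableEq V]
    (g : Finset V → M) (N : Finset V) (k : ℕ)
    (h : Fintype.card M < (N.card).choose k) :
    ∃ T ∈ powersetCard k N, ∃ T' ∈ powersetCard k N, T ≠ T' ∧ g T = g T' := by
  have hc : (univ : Finset M).card < (powersetCard k N).card := by
    simpa [card_powersetCard, Finset.card_univ] using h
  obtain ⟨T, hT, T', hT', hne, heq⟩ :=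
    exists_ne_map_eq_of_card_lt_of_maps_to hc (fun x _ => mem_univ (g x))
  exact ⟨T, hT, T', hT', hne, heq⟩

private lemma count_helper {n k cM : ℕ} (hM : (cM:ℝ) < (((n:ℝ)-2)/(2*k))^k)
    (hb : 1 < ((n:ℝ)-2)/(2*k)) (hk : 1 ≤ k) {m : ℕ} (hm : ((n:ℝ)-2)/2 ≤ m) :
    cM < m.choose k := by
  have hk0 : (0:ℝ) < k := by exact_mod_cast hk
  have hb0 : (0:ℝ) ≤ ((n:ℝ)-2)/(2*k) := le_of_lt (lt_trans zero_lt_one hb)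
  have hkm : (k:ℝ) ≤ m := by
    have h2k : 2*(k:ℝ) < (n:ℝ)-2 := by
      have := (one_lt_div (by positivity)).mp hb
      linarith
    have : (k:ℝ) < ((n:ℝ)-2)/2 := by linarith
    linarith
  have h1 : ((n:ℝ)-2)/(2*k) ≤ (m:ℝ)/k := by
    rw [div_le_div_iff₀ (by positivity) hk0]
    have := hm
    nlinarith
  have h2 : ((m:ℝ)/k)^k ≤ m.choose k := div_pow_le_choose k m (by exact_mod_cast hkm)
  have : (cM:ℝ) < m.choose k :=
    lt_of_lt_of_le hM (le_trans (pow_le_pow_left₀ hb0 h1 k) h2)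
  exact_mod_cast this

theorem stmt_14 {V M : Type*} [Fintype V] [DecidableEq V] [Fintype M]
    (n : ℕ) (hn : Fintype.card V = n) (hn3 : 3 ≤ n) (u : V) (k : ℕ) (hk : 1 ≤ k)
    (f : V → Finset V → M)
    (hM : (Fintype.card M : ℝ) < (((n : ℝ) - 2) / (2 * (k : ℝ))) ^ k) :
    ∃ v w : V, v ≠ w ∧ v ≠ u ∧ w ≠ u ∧
      (∃ S S' : Finset V, S ≠ S' ∧ S.card = k ∧ S'.card = k ∧
        (↑S ⊆ (Set.univ \ {u, v} : Set V)) ∧ (↑S' ⊆ (Set.univ \ {u, v} : Set V)) ∧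
        w ∈ S ∧ w ∉ S' ∧ f v S = f v S') ∧
      (∃ T T' : Finset V, T ≠ T' ∧ T.card = k ∧ T'.card = k ∧
        (↑T ⊆ (Set.univ \ {u, w} : Set V)) ∧ (↑T' ⊆ (Set.univ \ {u, w} : Set V)) ∧
        v ∈ T ∧ v ∉ T' ∧ f w T = f w T') := by
  classical
  have hn3' : (3:ℝ) ≤ (n:ℝ) := by exact_mod_cast hn3
  have hk0 : (0:ℝ) < (k:ℝ) := by exact_mod_cast hk
  have hM1 : 1 ≤ Fintype.card M := Fintype.card_pos_iff.mpr ⟨f u ∅⟩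
  -- the base is > 1
  have hb : 1 < ((n:ℝ)-2)/(2*(k:ℝ)) := by
    by_contra h
    push_neg at h
    have hnn : (0:ℝ) ≤ ((n:ℝ)-2)/(2*(k:ℝ)) := div_nonneg (by linarith) (by positivity)
    have h1 : (((n:ℝ)-2)/(2*(k:ℝ)))^k ≤ 1 := pow_le_one₀ hnn h
    have h2 : (Fintype.card M : ℝ) < 1 := lt_of_lt_of_le hM h1
    have : Fintype.card M < 1 := by exact_mod_cast h2
    omega
  -- helper for coercion of subsets
  have coe_sub : ∀ (a b : V) (S : Finset V), S ⊆ univ \ {a, b} →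
      (↑S : Set V) ⊆ (Set.univ \ {a, b}) := by
    intro a b S hS x hx
    have hx' : x ∈ S := hx
    have := hS hx'
    simp only [Finset.mem_sdiff, Finset.mem_insert, Finset.mem_singleton] at this
    simp only [Set.mem_diff, Set.mem_univ, Set.mem_insert_iff, Set.mem_singleton_iff, true_and]
    tauto
  -- ground set cardinality
  have hΩcard : ∀ v : V, v ≠ u → ((univ \ {u, v} : Finset V).card : ℝ) = (n:ℝ) - 2 := by
    intro v hv
    rw [card_sdiff_of_subset (subset_univ _), card_univ, hn, card_pair (Ne.symm hv),
      Nat.cast_sub (by omega)]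
    norm_num
  -- the Fooling set
  let P : V → V → Prop := fun v w =>
    ∃ S ∈ powersetCard k (univ \ {u, v}), ∃ S' ∈ powersetCard k (univ \ {u, v}),
      S ≠ S' ∧ w ∈ S ∧ w ∉ S' ∧ f v S = f v S'
  haveI instP : ∀ v : V, DecidablePred (P v) := fun v => Classical.decPred _
  set Fool : V → Finset V := fun v => (univ \ {u, v}).filter (P v) with hFool
  have memFool : ∀ v w₀ : V, w₀ ∈ Fool v ↔ w₀ ∈ (univ \ {u, v} : Finset V) ∧
      (∃ S ∈ powersetCard k (univ \ {u, v}), ∃ S' ∈ powersetCard k (univ \ {u, v}),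
      S ≠ S' ∧ w₀ ∈ S ∧ w₀ ∉ S' ∧ f v S = f v S') := by
    intro v w₀
    rw [hFool]
    exact Finset.mem_filter
  -- Claim 1
  have claim1 : ∀ v : V, v ≠ u → ((n:ℝ)-2)/2 ≤ ((Fool v).card : ℝ) := by
    intro v hv
    by_contra h
    push_neg at h
    set N : Finset V := (univ \ {u, v}) \ Fool v with hN
    have hsub : Fool v ⊆ univ \ {u, v} := filter_subset _ _
    have hF_le : (Fool v).card ≤ (univ \ {u, v} : Finset V).card := card_le_card hsub
    have hNcard : (N.card : ℝ) = ((n:ℝ) - 2) - (Fool v).card := by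
      rw [hN, card_sdiff_of_subset hsub, Nat.cast_sub hF_le, hΩcard v hv]
    have hNbig : ((n:ℝ)-2)/2 ≤ (N.card : ℝ) := by rw [hNcard]; linarith
    have hcnt : Fintype.card M < (N.card).choose k := count_helper hM hb hk hNbig
    obtain ⟨T, hT, T', hT', hne, heq⟩ := collision_aux (f v) N k hcnt
    rw [mem_powersetCard] at hT hT'
    have hns : ¬ T ⊆ T' := fun hss =>
      hne (eq_of_subset_of_card_le hss (le_of_eq (hT'.2.trans hT.2.symm)))
    obtain ⟨w, hwT, hwT'⟩ := not_subset.mp hns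
    have hwN : w ∈ N := hT.1 hwT
    have hwΩ : w ∈ univ \ {u, v} := (sdiff_subset) hwN
    have hTΩ : T ∈ powersetCard k (univ \ {u, v}) :=
      mem_powersetCard.mpr ⟨hT.1.trans sdiff_subset, hT.2⟩
    have hT'Ω : T' ∈ powersetCard k (univ \ {u, v}) :=
      mem_powersetCard.mpr ⟨hT'.1.trans sdiff_subset, hT'.2⟩
    have hwF : w ∈ Fool v :=
      (memFool v w).mpr ⟨hwΩ, T, hTΩ, T', hT'Ω, hne, hwT, hwT', heq⟩
    have : w ∉ Fool v := (Finset.mem_sdiff.mp hwN).2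
    exact this hwF
  -- Claim 2: pigeonhole
  set D : Finset V := univ \ {u} with hD
  have hDcard : D.card = n - 1 := by
    rw [hD, card_sdiff_of_subset (subset_univ _), card_univ, hn, card_singleton]
  have hDne : D.Nonempty := card_pos.mp (by omega)
  have hFsubD : ∀ v : V, Fool v ⊆ D := by
    intro v w hw
    have h1 := ((memFool v w).mp hw).1
    simp only [Finset.mem_sdiff, Finset.mem_insert, Finset.mem_singleton] at h1
    push_neg at h1
    simp only [hD, Finset.mem_sdiff, Finset.mem_singleton]
    exact ⟨Finset.mem_univ _, h1.2.1⟩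
  have hswap : ∑ v ∈ D, (Fool v).card = ∑ w ∈ D, (D.filter (fun v => w ∈ Fool v)).card := by
    have h1 : ∀ v ∈ D, (Fool v).card = ∑ w ∈ D, if w ∈ Fool v then 1 else 0 := by
      intro v _
      rw [← Finset.card_filter, Finset.filter_mem_eq_inter,
        Finset.inter_eq_right.mpr (hFsubD v)]
    rw [Finset.sum_congr rfl h1, Finset.sum_comm]
    exact Finset.sum_congr rfl fun w _ => (Finset.card_filter _ _).symm
  have claim2 : ∃ w ∈ D, ((n:ℝ)-2)/2 ≤ ((D.filter (fun v => w ∈ Fool v)).card : ℝ) := by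
    by_contra h
    push_neg at h
    have hlb : (D.card : ℝ) * (((n:ℝ)-2)/2) ≤ ∑ v ∈ D, ((Fool v).card : ℝ) := by
      calc (D.card : ℝ) * (((n:ℝ)-2)/2) = ∑ _v ∈ D, ((n:ℝ)-2)/2 := by
            rw [Finset.sum_const, nsmul_eq_mul]
        _ ≤ ∑ v ∈ D, ((Fool v).card : ℝ) := Finset.sum_le_sum (fun v hv => by
            apply claim1 v
            simp only [hD, Finset.mem_sdiff, Finset.mem_singleton] at hv
            exact hv.2)
    have hub : ∑ w ∈ D, ((D.filter (fun v => w ∈ Fool v)).card : ℝ)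
        < (D.card : ℝ) * (((n:ℝ)-2)/2) := by
      calc ∑ w ∈ D, ((D.filter (fun v => w ∈ Fool v)).card : ℝ)
          < ∑ _w ∈ D, ((n:ℝ)-2)/2 := Finset.sum_lt_sum_of_nonempty hDne h
        _ = (D.card : ℝ) * (((n:ℝ)-2)/2) := by rw [Finset.sum_const, nsmul_eq_mul]
    have heqsum : ∑ v ∈ D, ((Fool v).card : ℝ)
        = ∑ w ∈ D, ((D.filter (fun v => w ∈ Fool v)).card : ℝ) := by
      exact_mod_cast congrArg (fun x : ℕ => (x:ℝ)) hswap
    linarith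
  obtain ⟨w, hwD, hwcount⟩ := claim2
  have hwu : w ≠ u := by
    simp only [hD, Finset.mem_sdiff, Finset.mem_singleton] at hwD
    exact hwD.2
  set A : Finset V := D.filter (fun v => w ∈ Fool v) with hA
  have hAsub : A ⊆ univ \ {u, w} := by
    intro v hv
    rw [hA, mem_filter] at hv
    obtain ⟨hvD, hvF⟩ := hv
    have hwv := ((memFool v w).mp hvF).1
    simp only [Finset.mem_sdiff, Finset.mem_insert, Finset.mem_singleton] at hwv
    push_neg at hwv
    simp only [hD, Finset.mem_sdiff, Finset.mem_singleton] at hvD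
    simp only [Finset.mem_sdiff, Finset.mem_insert, Finset.mem_singleton]
    refine ⟨Finset.mem_univ _, ?_⟩
    push_neg
    exact ⟨hvD.2, fun h => hwv.2.2 h.symm⟩
  -- Claim 3: collision for f w on subsets of A
  have hcnt : Fintype.card M < (A.card).choose k := count_helper hM hb hk hwcount
  obtain ⟨T, hT, T', hT', hne, heq⟩ := collision_aux (f w) A k hcnt
  rw [mem_powersetCard] at hT hT'
  have hns : ¬ T ⊆ T' := fun hss =>
    hne (eq_of_subset_of_card_le hss (le_of_eq (hT'.2.trans hT.2.symm)))
  obtain ⟨v, hvT, hvT'⟩ := not_subset.mp hns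
  have hvA : v ∈ A := hT.1 hvT
  have hvF : w ∈ Fool v := by
    have := (mem_filter.mp (hA ▸ hvA)).2
    exact this
  have hvuw : v ∈ univ \ {u, w} := hAsub hvA
  simp only [Finset.mem_sdiff, Finset.mem_insert, Finset.mem_singleton] at hvuw
  push_neg at hvuw
  obtain ⟨-, hvu, hvw⟩ := hvuw
  obtain ⟨-, S, hS, S', hS', hSne, hwS, hwS', hSeq⟩ := (memFool v w).mp hvF
  rw [mem_powersetCard] at hS hS'
  refine ⟨v, w, hvw, hvu, hwu, ⟨S, S', hSne, hS.2, hS'.2,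
    coe_sub u v S hS.1, coe_sub u v S' hS'.1, hwS, hwS', hSeq⟩,
    ⟨T, T', hne, hT.2, hT'.2,
    coe_sub u w T (hT.1.trans hAsub), coe_sub u w T' (hT'.1.trans hAsub),
    hvT, hvT', heq⟩⟩
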